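/- Let G be a counterexample to the claim that every planar graph with no 4-cycles is (5, 5)-colorable, chosen with the minimum number of vertices of degree at least 3 and subject to that with the minimum number of edges. Then every edge of G has an endpoint of degree at least 7. -/

import Mathlib

open SimpleGraph

/-- `H` is a minor of `G`: branch sets are nonempty, connected, pairwise disjoint,
and edges of `H` are realized between branch sets. -/
def SimpleGraph.IsMinor {W V : Type*} (H : SimpleGraph W) (G : SimpleGraph V) : Prop :=
  ∃ f : W → Set V, (∀ w, (f w).Nonempty) ∧ (∀ w, (G.induce (f w)).Connected) ∧
    (∀ w w', w ≠ w' → Disjoint (f w) (f w')) ∧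
    (∀ w w', H.Adj w w' → ∃ a ∈ f w, ∃ b ∈ f w', G.Adj a b)

/-- A graph is planar iff it has no `K₅` minor and no `K₃,₃` minor (Wagner's theorem). -/
def SimpleGraph.Planar {V : Type*} (G : SimpleGraph V) : Prop :=
  ¬ (completeGraph (Fin 5)).IsMinor G ∧
    ¬ (completeBipartiteGraph (Fin 3) (Fin 3)).IsMinor G

/-- `G` contains no cycle of length `n` (as a subgraph). -/
def SimpleGraph.HasNoCycleOfLength {V : Type*} (G : SimpleGraph V) (n : ℕ) : Prop :=
  ∀ (v : V) (w : G.Walk v v), w.IsCycle → w.length ≠ n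

/-- `f` is a `(d 0, …, d (k-1))`-coloring of `G`: each vertex has at most `d (f v)`
neighbors in its own color class. -/
def SimpleGraph.IsDefectiveColoring {V : Type*} {k : ℕ} (G : SimpleGraph V)
    (d : Fin k → ℕ) (f : V → Fin k) : Prop :=
  ∀ v, {u | G.Adj v u ∧ f u = f v}.ncard ≤ d (f v)

/-- `G` is `(d 0, …, d (k-1))`-colorable. -/
def SimpleGraph.DefectiveColorable {V : Type*} {k : ℕ} (G : SimpleGraph V)
    (d : Fin k → ℕ) : Prop :=
  ∃ f : V → Fin k, G.IsDefectiveColoring d f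

lemma minor_mono {W V : Type*} {K : SimpleGraph W} {H G : SimpleGraph V} (h : H ≤ G) :
    K.IsMinor H → K.IsMinor G := by
  rintro ⟨f, h1, h2, h3, h4⟩
  refine ⟨f, h1, fun w => (h2 w).mono ?_, h3, fun w w' hww => ?_⟩
  · intro a b hab
    exact h hab
  · obtain ⟨a, ha, b, hb, hab⟩ := h4 w w' hww
    exact ⟨a, ha, b, hb, h hab⟩

lemma planar_mono {V : Type*} {H G : SimpleGraph V} (h : H ≤ G) (hp : G.Planar) : H.Planar :=
  ⟨fun hm => hp.1 (minor_mono h hm), fun hm => hp.2 (minor_mono h hm)⟩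

lemma noCycle_mono {V : Type*} {H G : SimpleGraph V} (h : H ≤ G) {n : ℕ}
    (hg : G.HasNoCycleOfLength n) : H.HasNoCycleOfLength n := by
  intro v w hw hl
  exact hg v (w.mapLe h) (hw.mapLe h) (by simpa using hl)

lemma mval (i : Fin 2) : (![5, 5] : Fin 2 → ℕ) i = 5 := by fin_cases i <;> rfl

/-- The flip lemma: if `f` is a (5,5)-coloring of `G - uv` and all `G`-neighbors of `u`
have the same color as `u`, then flipping `u`'s color yields a (5,5)-coloring of `G`. -/
lemma flip_ok {V : Type} [Fintype V] [DecidableEq V] (G : SimpleGraph V) (u v : V) (huv : G.Adj u v)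
    (f : V → Fin 2)
    (hf : ∀ w, {x | (G.deleteEdges {s(u, v)}).Adj w x ∧ f x = f w}.ncard ≤ 5)
    (hall : ∀ x, G.Adj u x → f x = f u) :
    G.IsDefectiveColoring ![5, 5] (Function.update f u (f u + 1)) := by
  have hflip : ∀ a : Fin 2, a + 1 ≠ a := by decide
  set g := Function.update f u (f u + 1) with hg
  intro w
  rw [mval]
  by_cases hwu : w = u
  · subst hwu
    have : {x | G.Adj w x ∧ g x = g w} = ∅ := by
      ext x
      simp only [Set.mem_setOf_eq, Set.mem_empty_iff_false, iff_false, not_and]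
      intro hadj
      have hxu : x ≠ w := fun hx => G.irrefl (hx ▸ hadj)
      rw [hg, Function.update_of_ne hxu, Function.update_self, hall x hadj]
      exact fun hx => hflip _ hx.symm
    rw [this]
    simp
  · have hgw : g w = f w := Function.update_of_ne hwu _ _
    have hsub : {x | G.Adj w x ∧ g x = g w} ⊆
        {x | (G.deleteEdges {s(u, v)}).Adj w x ∧ f x = f w} := by
      intro x ⟨hadj, hx⟩
      have hxu : x ≠ u := by
        intro h
        have hx' : g u = g w := h ▸ hx
        rw [hgw, hg, Function.update_self] at hx'
        exact hflip _ (hx'.trans (hall w (h ▸ hadj.symm)))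
      have hgx : g x = f x := Function.update_of_ne hxu _ _
      refine ⟨?_, by rw [← hgx, hx, hgw]⟩
      rw [SimpleGraph.deleteEdges_adj]
      refine ⟨hadj, ?_⟩
      intro he
      simp only [Set.mem_singleton_iff, Sym2.eq_iff] at he
      rcases he with ⟨hw, hx'⟩ | ⟨hw, hx'⟩
      · exact hwu hw
      · exact hxu hx'
    exact le_trans (Set.ncard_le_ncard hsub (Set.toFinite _)) (by simpa [mval] using hf w)

theorem stmt11 (V : Type) [Fintype V] (G : SimpleGraph V)
    (hp : G.Planar) (h4 : G.HasNoCycleOfLength 4)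
    (hnc : ¬ G.DefectiveColorable ![5, 5])
    (hmin : ∀ (W : Type) [Fintype W] (H : SimpleGraph W), H.Planar →
      H.HasNoCycleOfLength 4 → ¬ H.DefectiveColorable ![5, 5] →
      {v : V | 3 ≤ (G.neighborSet v).ncard}.ncard
        ≤ {w : W | 3 ≤ (H.neighborSet w).ncard}.ncard ∧
      ({w : W | 3 ≤ (H.neighborSet w).ncard}.ncard
          = {v : V | 3 ≤ (G.neighborSet v).ncard}.ncard →
        G.edgeSet.ncard ≤ H.edgeSet.ncard)) :
    ∀ u v : V, G.Adj u v →
      7 ≤ (G.neighborSet u).ncard ∨ 7 ≤ (G.neighborSet v).ncard := by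
  intro u v huv
  haveI := Classical.decEq V
  by_contra hcon
  push_neg at hcon
  obtain ⟨hdu, hdv⟩ := hcon
  set H := G.deleteEdges {s(u, v)} with hH
  have hHle : H ≤ G := G.deleteEdges_le _
  by_cases hHc : H.DefectiveColorable ![5, 5]
  · -- extend the coloring of H to G, contradicting hnc
    obtain ⟨f, hf⟩ := hHc
    have hf5 : ∀ w, {x | H.Adj w x ∧ f x = f w}.ncard ≤ 5 := by
      intro w; simpa [mval] using hf w
    by_cases hu : ∀ x, G.Adj u x → f x = f u
    · exact hnc ⟨_, flip_ok G u v huv f hf5 hu⟩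
    by_cases hv : ∀ x, G.Adj v x → f x = f v
    · have hf5' : ∀ w, {x | (G.deleteEdges {s(v, u)}).Adj w x ∧ f x = f w}.ncard ≤ 5 := by
        intro w
        have : ({s(v, u)} : Set (Sym2 V)) = {s(u, v)} := by rw [Sym2.eq_swap]
        rw [this]
        exact hf5 w
      exact hnc ⟨_, flip_ok G v u huv.symm f hf5' hv⟩
    -- f itself works for G
    apply hnc
    refine ⟨f, fun w => ?_⟩
    rw [mval]
    by_cases hwu : w = u
    · subst hwu
      push_neg at hu
      obtain ⟨x, hx, hfx⟩ := hu
      have hsub : {y | G.Adj w y ∧ f y = f w} ⊆ G.neighborSet w \ {x} := by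
        intro y ⟨hy, hfy⟩
        exact ⟨hy, fun h => hfx (by rw [← (Set.mem_singleton_iff.mp h ▸ hfy : f y = f w)]; rw [Set.mem_singleton_iff.mp h])⟩
      calc {y | G.Adj w y ∧ f y = f w}.ncard
          ≤ (G.neighborSet w \ {x}).ncard := Set.ncard_le_ncard hsub (Set.toFinite _)
        _ = (G.neighborSet w).ncard - 1 := Set.ncard_diff_singleton_of_mem hx
        _ ≤ 5 := by omega
    by_cases hwv : w = v
    · subst hwv
      push_neg at hv
      obtain ⟨x, hx, hfx⟩ := hv
      have hsub : {y | G.Adj w y ∧ f y = f w} ⊆ G.neighborSet w \ {x} := by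
        intro y ⟨hy, hfy⟩
        refine ⟨hy, fun h => hfx ?_⟩
        rw [Set.mem_singleton_iff] at h; subst h; exact hfy
      calc {y | G.Adj w y ∧ f y = f w}.ncard
          ≤ (G.neighborSet w \ {x}).ncard := Set.ncard_le_ncard hsub (Set.toFinite _)
        _ = (G.neighborSet w).ncard - 1 := Set.ncard_diff_singleton_of_mem hx
        _ ≤ 5 := by omega
    · have heq : {x | G.Adj w x ∧ f x = f w} = {x | H.Adj w x ∧ f x = f w} := by
        ext x
        simp only [Set.mem_setOf_eq, hH, SimpleGraph.deleteEdges_adj, Set.mem_singleton_iff]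
        constructor
        · rintro ⟨hadj, hfx⟩
          refine ⟨⟨hadj, fun he => ?_⟩, hfx⟩
          rw [Sym2.eq_iff] at he
          rcases he with ⟨h1, _⟩ | ⟨h1, _⟩
          · exact hwu h1
          · exact hwv h1
        · rintro ⟨⟨hadj, _⟩, hfx⟩
          exact ⟨hadj, hfx⟩
      rw [heq]
      exact hf5 w
  · -- H is still a counterexample but with fewer edges: contradiction with hmin
    obtain ⟨hle1, hle2⟩ := hmin V H (planar_mono hHle hp) (noCycle_mono hHle h4) hHc
    have hsub : {w : V | 3 ≤ (H.neighborSet w).ncard} ⊆ {w : V | 3 ≤ (G.neighborSet w).ncard} := by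
      intro w hw
      exact le_trans hw (Set.ncard_le_ncard (fun x hx => hHle hx) (Set.toFinite _))
    have hle3 : {w : V | 3 ≤ (H.neighborSet w).ncard}.ncard
        ≤ {w : V | 3 ≤ (G.neighborSet w).ncard}.ncard :=
      Set.ncard_le_ncard hsub (Set.toFinite _)
    have hedge : G.edgeSet.ncard ≤ H.edgeSet.ncard := hle2 (le_antisymm hle3 hle1)
    have hmem : s(u, v) ∈ G.edgeSet := huv
    have : H.edgeSet.ncard < G.edgeSet.ncard := by
      rw [hH, SimpleGraph.edgeSet_deleteEdges]
      have : G.edgeSet \ {s(u, v)} = G.edgeSet \ {s(u, v)} := rfl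
      calc (G.edgeSet \ {s(u, v)}).ncard
          = (G.edgeSet \ {s(u, v)} : Set (Sym2 V)).ncard := rfl
        _ < G.edgeSet.ncard := by
            have := Set.ncard_diff_singleton_lt_of_mem hmem (Set.toFinite _)
            simpa using this
    omega
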